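/- arXiv:math/0605167 — 5 statements merged into one kernel-verified Lean document; each statement's English description precedes it below -/
import Mathlib

section
/- Let p be an odd prime such that (p−1)/2 is odd (equivalently p ≡ 3 mod 4). Then the Bernoulli number B_{(p+1)/2} is not congruent to 0 modulo p, i.e., p does not divide the numerator of B_{(p+1)/2}. -/
open Finset

lemma auxA (x c : ℤ) : ∀ n : ℕ, (c:ℤ)^2 ∣ (x + c)^(n+1) - (x^(n+1) + (n+1) * x^n * c)
  | 0 => by ring_nf; simp
  | (n+1) => by
    have ih := auxA x c n
    have h : (x + c)^(n+1+1) - (x^(n+1+1) + ((n+1:ℕ)+1) * x^(n+1) * c)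
        = ((x + c)^(n+1) - (x^(n+1) + (n+1) * x^n * c)) * (x + c)
          + ((n+1) * x^n) * c^2 := by push_cast; ring
    rw [h]
    exact dvd_add (ih.mul_right _) (Dvd.intro_left _ rfl)

lemma auxB {p : ℕ} [hp : Fact p.Prime] {k : ℕ} (hk1 : 1 ≤ k) (hk : k < p - 1) :
    (p:ℤ) ∣ ∑ a ∈ range p, (a:ℤ)^k := by
  have h0 : ((∑ a ∈ range p, (a:ℤ)^k : ℤ) : ZMod p) = 0 := by
    push_cast
    have key : ∑ a ∈ range p, (a : ZMod p)^k = ∑ x : ZMod p, x^k :=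
      Finset.sum_nbij' (i := fun a => (a : ZMod p)) (j := fun x => x.val)
        (fun a _ => Finset.mem_univ _)
        (fun x _ => Finset.mem_range.mpr (ZMod.val_lt x))
        (fun a ha => ZMod.val_cast_of_lt (Finset.mem_range.mp ha))
        (fun x _ => by simp [ZMod.natCast_val, ZMod.cast_id])
        (fun a _ => rfl)
    rw [key]
    exact FiniteField.sum_pow_lt_card_sub_one (K := ZMod p) k (by rw [ZMod.card]; exact hk)
  exact (ZMod.intCast_zmod_eq_zero_iff_dvd _ p).mp h0

lemma auxNorm {p : ℕ} [hp : Fact p.Prime] {m : ℕ} (h1 : 0 < m) (h2 : m < p) :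
    ‖(m : ℚ_[p])‖ = 1 := by
  have hd : ¬ ((p:ℤ) ∣ (m:ℤ)) := by
    intro hdvd
    have := Int.le_of_dvd (by exact_mod_cast h1) hdvd
    omega
  have h3 : ¬ ‖((m:ℤ) : ℚ_[p])‖ < 1 := fun hlt => hd (Padic.norm_intCast_lt_one_iff.mp hlt)
  have h4 := Padic.norm_int_le_one (p := p) (m : ℤ)
  push_cast at h3 h4
  exact le_antisymm h4 (not_lt.mp h3)

lemma auxC {p : ℕ} [hp : Fact p.Prime] {k : ℕ} (hk1 : 1 ≤ k) (hkp : k + 1 < p)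
    (hsmall : ∀ i < k, ‖((bernoulli i : ℚ) : ℚ_[p])‖ ≤ 1) :
    ‖((bernoulli k : ℚ) : ℚ_[p]) * p - ((∑ a ∈ range p, (a:ℤ)^k : ℤ) : ℚ_[p])‖
      ≤ ((p:ℝ))^(-2 : ℤ) := by
  have hk1q : ((k:ℚ) + 1) ≠ 0 := by positivity
  have hid : (bernoulli k : ℚ) * p - ((∑ a ∈ range p, (a:ℤ)^k : ℤ) : ℚ)
      = - ∑ i ∈ range k, bernoulli i * ((k+1).choose i) * (p:ℚ)^(k+1-i) / (k+1) := by
    have hf := sum_range_pow p k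
    rw [Finset.sum_range_succ] at hf
    have hlast : (bernoulli k : ℚ) * ((k+1).choose k) * (p:ℚ)^(k+1-k) / (k+1)
        = (bernoulli k : ℚ) * p := by
      rw [Nat.choose_succ_self_right]
      have : k + 1 - k = 1 := by omega
      rw [this]
      field_simp
      push_cast; ring
    rw [hlast] at hf
    have hcast : ((∑ a ∈ range p, (a:ℤ)^k : ℤ) : ℚ) = ∑ a ∈ range p, (a:ℚ)^k := by push_cast; rfl
    rw [hcast, hf]; ring
  have hidp : ((bernoulli k : ℚ) : ℚ_[p]) * p - ((∑ a ∈ range p, (a:ℤ)^k : ℤ) : ℚ_[p])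
      = - ∑ i ∈ range k, ((bernoulli i : ℚ) : ℚ_[p]) * ((k+1).choose i : ℚ_[p]) * (p:ℚ_[p])^(k+1-i) / ((k:ℚ_[p])+1) := by
    have := congrArg (fun q : ℚ => (q : ℚ_[p])) hid
    push_cast at this
    convert this using 2 <;> push_cast <;> ring
  rw [hidp, norm_neg]
  apply IsUltrametricDist.norm_sum_le_of_forall_le_of_nonneg (by positivity)
  intro i hi
  have hi' : i < k := Finset.mem_range.mp hi
  have hnormp : ‖(p:ℚ_[p])^(k+1-i)‖ ≤ ((p:ℝ))^(-2:ℤ) := by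
    rw [Padic.norm_p_pow]
    apply zpow_le_zpow_right₀ (by exact_mod_cast hp.1.one_lt.le)
    omega
  have hchoose : ‖(((k+1).choose i : ℕ) : ℚ_[p])‖ ≤ 1 := by
    have := Padic.norm_int_le_one (p := p) ((k+1).choose i : ℤ)
    push_cast at this ⊢; exact this
  have hden : ‖((k:ℚ_[p])+1)‖ = 1 := by
    have : ((k:ℚ_[p])+1) = ((k+1 : ℕ) : ℚ_[p]) := by push_cast; ring
    rw [this]; exact auxNorm (by omega) hkp
  rw [div_eq_mul_inv, norm_mul, norm_mul, norm_mul, norm_inv, hden]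
  calc ‖((bernoulli i : ℚ) : ℚ_[p])‖ * ‖(((k+1).choose i : ℕ) : ℚ_[p])‖ * ‖(p:ℚ_[p])^(k+1-i)‖ * (1:ℝ)⁻¹
      ≤ 1 * 1 * ((p:ℝ))^(-2:ℤ) * 1 := by
        gcongr <;> first
          | exact hsmall i hi'
          | exact hchoose
          | exact hnormp
          | norm_num
    _ = ((p:ℝ))^(-2:ℤ) := by ring

lemma auxD {p : ℕ} [hp : Fact p.Prime] : ∀ k, k < p - 1 → ‖((bernoulli k : ℚ) : ℚ_[p])‖ ≤ 1 := by
  intro k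
  induction k using Nat.strong_induction_on with
  | _ k ih =>
    intro hk
    rcases Nat.eq_zero_or_pos k with rfl | hk1
    · simp
    have hp2 : (2:ℕ) ≤ p := hp.1.two_le
    have hkp : k + 1 < p := by omega
    have hC := auxC (p := p) hk1 hkp (fun i hi => ih i hi (by omega))
    obtain ⟨t, ht⟩ := auxB (p := p) hk1 hk
    have hS : ‖((∑ a ∈ range p, (a:ℤ)^k : ℤ) : ℚ_[p])‖ ≤ ((p:ℝ))⁻¹ := by
      rw [ht]
      push_cast
      rw [norm_mul, Padic.norm_p]
      calc (p:ℝ)⁻¹ * ‖((t:ℤ) : ℚ_[p])‖ ≤ (p:ℝ)⁻¹ * 1 := by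
            gcongr; exact Padic.norm_int_le_one t
        _ = (p:ℝ)⁻¹ := mul_one _
    have hppos : (0:ℝ) < (p:ℝ)⁻¹ := by
      have : (0:ℝ) < p := by exact_mod_cast hp.1.pos
      positivity
    have hmul : ‖((bernoulli k : ℚ) : ℚ_[p]) * p‖ ≤ (p:ℝ)⁻¹ := by
      have heq : ((bernoulli k : ℚ) : ℚ_[p]) * p
          = (((bernoulli k : ℚ) : ℚ_[p]) * p - ((∑ a ∈ range p, (a:ℤ)^k : ℤ) : ℚ_[p]))
            + ((∑ a ∈ range p, (a:ℤ)^k : ℤ) : ℚ_[p]) := by ring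
      rw [heq]
      refine le_trans (IsUltrametricDist.norm_add_le_max _ _) (max_le (le_trans hC ?_) hS)
      have : ((p:ℝ))⁻¹ = (p:ℝ)^(-1 : ℤ) := by rw [zpow_neg, zpow_one]
      rw [this]
      exact zpow_le_zpow_right₀ (by exact_mod_cast hp.1.one_lt.le) (by omega)
    rw [norm_mul, Padic.norm_p] at hmul
    calc ‖((bernoulli k : ℚ) : ℚ_[p])‖ = ‖((bernoulli k : ℚ) : ℚ_[p])‖ * (p:ℝ)⁻¹ * (p:ℝ) := by
          field_simp
      _ ≤ (p:ℝ)⁻¹ * (p:ℝ) := by gcongr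
      _ = 1 := by field_simp

lemma auxE {p : ℕ} (hp2 : p % 2 = 1) (g : ℕ → ℤ) :
    ∑ a ∈ Ioo 0 p, g (2*a - p * (if p ≤ 2*a then 1 else 0)) = ∑ a ∈ Ioo 0 p, g a := by
  apply Finset.sum_nbij' (i := fun a => 2*a - p * (if p ≤ 2*a then 1 else 0))
    (j := fun b => if b % 2 = 0 then b/2 else (b+p)/2)
  · intro a ha
    simp only [Finset.mem_Ioo] at *
    split_ifs <;> omega
  · intro b hb
    simp only [Finset.mem_Ioo] at *
    split_ifs <;> omega
  · intro a ha
    simp only [Finset.mem_Ioo] at ha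
    split_ifs <;> omega
  · intro b hb
    simp only [Finset.mem_Ioo] at hb
    split_ifs <;> omega
  · intro a _
    rfl

lemma auxF {p : ℕ} [hp : Fact p.Prime] (hp2 : p % 2 = 1) {n : ℕ} (hn : 1 ≤ n) :
    (p:ℤ)^2 ∣ (2^n - 1) * (∑ a ∈ Ioo 0 p, (a:ℤ)^n)
      - n * p * (∑ a ∈ Ioo 0 p, ((2*a - p * (if p ≤ 2*a then 1 else 0) : ℕ) : ℤ)^(n-1)
          * (if p ≤ 2*a then 1 else 0)) := by
  obtain ⟨m, rfl⟩ : ∃ m, n = m + 1 := ⟨n - 1, by omega⟩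
  set q : ℕ → ℕ := fun a => if p ≤ 2*a then 1 else 0 with hq
  set r : ℕ → ℕ := fun a => 2*a - p * q a with hr
  have key : ∀ a ∈ Ioo 0 p, (p:ℤ)^2 ∣
      ((2*a : ℤ))^(m+1) - (((r a : ℕ) : ℤ)^(m+1) + (m+1) * ((r a : ℕ) : ℤ)^m * (p * (q a : ℤ))) := by
    intro a ha
    simp only [Finset.mem_Ioo] at ha
    have hxc : ((2*a : ℤ)) = ((r a : ℕ) : ℤ) + (p * (q a : ℤ)) := by
      simp only [hr, hq]
      split_ifs <;> push_cast <;> omega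
    have hA := auxA ((r a : ℕ) : ℤ) (p * (q a : ℤ)) m
    rw [← hxc] at hA
    refine dvd_trans ?_ hA
    have : ((p:ℤ) * (q a : ℤ))^2 = (p:ℤ)^2 * (q a : ℤ)^2 := by ring
    rw [this]
    exact Dvd.intro _ rfl
  have hsumdvd : (p:ℤ)^2 ∣ ∑ a ∈ Ioo 0 p,
      (((2*a : ℤ))^(m+1) - (((r a : ℕ) : ℤ)^(m+1) + (m+1) * ((r a : ℕ) : ℤ)^m * (p * (q a : ℤ)))) :=
    Finset.dvd_sum key
  have hsplit : ∑ a ∈ Ioo 0 p,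
      (((2*a : ℤ))^(m+1) - (((r a : ℕ) : ℤ)^(m+1) + (m+1) * ((r a : ℕ) : ℤ)^m * (p * (q a : ℤ))))
      = (2^(m+1) - 1) * (∑ a ∈ Ioo 0 p, (a:ℤ)^(m+1))
        - (m+1) * p * (∑ a ∈ Ioo 0 p, ((r a : ℕ) : ℤ)^m * (q a : ℤ)) := by
    rw [Finset.sum_sub_distrib, Finset.sum_add_distrib]
    have h1 : ∑ a ∈ Ioo 0 p, ((2*a : ℤ))^(m+1) = 2^(m+1) * ∑ a ∈ Ioo 0 p, (a:ℤ)^(m+1) := by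
      rw [Finset.mul_sum]
      exact Finset.sum_congr rfl fun a _ => by ring
    have h2 : ∑ a ∈ Ioo 0 p, ((r a : ℕ) : ℤ)^(m+1) = ∑ a ∈ Ioo 0 p, (a:ℤ)^(m+1) := by
      have := auxE hp2 (fun b => (b:ℤ)^(m+1))
      simpa [hr, hq] using this
    have h3 : ∑ a ∈ Ioo 0 p, (m+1 : ℤ) * ((r a : ℕ) : ℤ)^m * (p * (q a : ℤ))
        = (m+1) * p * (∑ a ∈ Ioo 0 p, ((r a : ℕ) : ℤ)^m * (q a : ℤ)) := by
      rw [Finset.mul_sum]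
      exact Finset.sum_congr rfl fun a _ => by ring
    rw [h1, h2, h3]
    ring
  rw [hsplit] at hsumdvd
  have hsums : (∑ a ∈ Ioo 0 p, ((2*a - p * (if p ≤ 2*a then 1 else 0) : ℕ) : ℤ)^(m+1-1)
        * (if p ≤ 2*a then 1 else 0)) = ∑ a ∈ Ioo 0 p, ((r a : ℕ) : ℤ)^m * (q a : ℤ) :=
    Finset.sum_congr rfl (fun a _ => by
      simp only [hr, hq, Nat.add_sub_cancel]
      split_ifs <;> simp)
  rw [hsums]
  have hcast : ((m+1 : ℕ) : ℤ) = (m : ℤ) + 1 := by push_cast; ring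
  rw [hcast]
  exact hsumdvd

lemma auxG {p : ℕ} [hp : Fact p.Prime] (hp2 : p % 2 = 1) (hodd : Odd ((p-1)/2)) :
    ¬ (p:ℤ) ∣ (∑ a ∈ Ioo 0 p, ((2*a - p * (if p ≤ 2*a then 1 else 0) : ℕ) : ℤ)^((p+1)/2 - 1)
        * (if p ≤ 2*a then 1 else 0)) := by
  set k := (p-1)/2 with hk
  have hp1 : 1 < p := hp.1.one_lt
  have hp3 : 2 < p := by omega
  have hexp : (p+1)/2 - 1 = k := by omega
  rw [hexp]
  set W : ℤ := ∑ a ∈ Ioo 0 p, (if p ≤ 2*a then (if (a : ZMod p)^k = 1 then (1:ℤ) else -1) else 0)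
    with hW
  have hfilter : (Ioo 0 p).filter (fun a => p ≤ 2*a) = Ico ((p+1)/2) p := by
    ext a
    simp only [Finset.mem_filter, Finset.mem_Ioo, Finset.mem_Ico]
    omega
  have hcard : ((Ioo 0 p).filter (fun a => p ≤ 2*a)).card = k := by
    rw [hfilter, Nat.card_Ico]; omega
  have hindsum : ∑ a ∈ Ioo 0 p, (if p ≤ 2*a then (1:ℤ) else 0) = (k:ℤ) := by
    rw [Finset.sum_boole, hcard]
  have hWodd : W % 2 = 1 := by
    rw [hW, Finset.sum_int_mod]
    have heq : ∑ a ∈ Ioo 0 p, ((if p ≤ 2*a then (if (a : ZMod p)^k = 1 then (1:ℤ) else -1) else 0) % 2)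
        = ∑ a ∈ Ioo 0 p, (if p ≤ 2*a then (1:ℤ) else 0) := by
      apply Finset.sum_congr rfl
      intro a _
      split_ifs <;> norm_num
    rw [heq, hindsum]
    obtain ⟨j, hj⟩ := hodd
    omega
  have hWne : W ≠ 0 := by intro h0; rw [h0] at hWodd; norm_num at hWodd
  have hWbound : |W| ≤ (k:ℤ) := by
    calc |W| ≤ ∑ a ∈ Ioo 0 p, |(if p ≤ 2*a then (if (a : ZMod p)^k = 1 then (1:ℤ) else -1) else 0)| :=
          Finset.abs_sum_le_sum_abs _ _
      _ = ∑ a ∈ Ioo 0 p, (if p ≤ 2*a then (1:ℤ) else 0) := by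
          apply Finset.sum_congr rfl
          intro a _
          split_ifs <;> norm_num
      _ = (k:ℤ) := hindsum
  have hWndvd : ¬ (p:ℤ) ∣ W := by
    intro hdvd
    have h1 := Int.le_of_dvd (abs_pos.mpr hWne) ((dvd_abs _ _).mpr hdvd)
    have hkp : (k:ℤ) < p := by exact_mod_cast (by omega : k < p)
    omega
  intro hdvd
  apply hWndvd
  rw [← ZMod.intCast_zmod_eq_zero_iff_dvd] at hdvd ⊢
  push_cast at hdvd
  have hterm : ∀ a ∈ Ioo 0 p,
      ((2*a - p * (if p ≤ 2*a then 1 else 0) : ℕ) : ZMod p)^k * (if p ≤ 2*a then (1:ZMod p) else 0)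
        = (2:ZMod p)^k * (if p ≤ 2*a then (if (a : ZMod p)^k = 1 then (1:ZMod p) else -1) else 0) := by
    intro a ha
    simp only [Finset.mem_Ioo] at ha
    by_cases hc : p ≤ 2*a
    · simp only [if_pos hc]
      have hna : ((2*a - p * 1 : ℕ) : ZMod p) = 2 * (a : ZMod p) := by
        rw [Nat.cast_sub (by omega)]
        push_cast
        simp [ZMod.natCast_self]
      rw [hna, mul_pow]
      have haz : (a : ZMod p) ≠ 0 := by
        rw [Ne, ZMod.natCast_eq_zero_iff]
        intro hdvd'
        have := Nat.le_of_dvd ha.1 hdvd'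
        omega
      have hx : ((a : ZMod p))^k = 1 ∨ ((a : ZMod p))^k = -1 := by
        have hsq : ((a : ZMod p))^k * ((a : ZMod p))^k = 1 := by
          rw [← pow_add]
          have hkk : k + k = p - 1 := by omega
          rw [hkk]
          exact ZMod.pow_card_sub_one_eq_one haz
        exact mul_self_eq_one_iff.mp hsq
      haveI : Fact (2 < p) := ⟨hp3⟩
      have hne1 : (-1 : ZMod p) ≠ 1 := CharP.neg_one_ne_one (ZMod p) p
      rcases hx with hx1 | hx1
      · rw [if_pos hx1, hx1, mul_one, mul_one]
      · rw [if_neg (by rw [hx1]; exact hne1), hx1]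
        ring
    · simp only [if_neg hc, mul_zero]
  rw [Finset.sum_congr rfl hterm, ← Finset.mul_sum] at hdvd
  have hWcast : ((W:ℤ) : ZMod p)
      = ∑ a ∈ Ioo 0 p, (if p ≤ 2*a then (if (a : ZMod p)^k = 1 then (1:ZMod p) else -1) else 0) := by
    rw [hW]
    push_cast
    apply Finset.sum_congr rfl
    intro a _
    split_ifs <;> norm_num
  rw [hWcast]
  have h2ne : (2:ZMod p)^k ≠ 0 := by
    apply pow_ne_zero
    have h2 : ((2:ℕ) : ZMod p) ≠ 0 := by
      rw [Ne, ZMod.natCast_eq_zero_iff]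
      intro hdvd'
      have := Nat.le_of_dvd (by norm_num) hdvd'
      omega
    exact_mod_cast h2
  rcases mul_eq_zero.mp hdvd with hcase | hcase
  · exact absurd hcase h2ne
  · exact hcase

/-- Let `p` be an odd prime such that `(p-1)/2` is odd (equivalently
`p ≡ 3 mod 4`). Then the Bernoulli number `B_{(p+1)/2}` is not congruent to `0` modulo `p`,
i.e. `p` does not divide the numerator of `B_{(p+1)/2}`. -/
theorem stmt_4 (p : ℕ) (hp : p.Prime) (hodd : Odd p) (h : Odd ((p - 1) / 2)) :
    ¬ ((p : ℤ) ∣ (bernoulli ((p + 1) / 2)).num) := by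
  haveI : Fact p.Prime := ⟨hp⟩
  have hp2 : p % 2 = 1 := Nat.odd_iff.mp hodd
  by_cases hp3 : p = 3
  · subst hp3
    have h2 : bernoulli ((3+1)/2) = 1/6 := by
      norm_num
    rw [h2]
    norm_num
  -- general case
  have hp1 : 1 < p := hp.one_lt
  have hp5 : 5 ≤ p := by
    rcases Nat.lt_or_ge p 5 with h5 | h5
    · interval_cases p <;> simp_all
    · exact h5
  set n := (p+1)/2 with hn
  have hn1 : 1 ≤ n := by omega
  have hnp : n + 1 < p := by omega
  set U : ℤ := ∑ a ∈ Ioo 0 p, ((2*a - p * (if p ≤ 2*a then 1 else 0) : ℕ) : ℤ)^(n-1)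
      * (if p ≤ 2*a then 1 else 0) with hU
  have hG : ¬ (p:ℤ) ∣ U := auxG hp2 h
  have hC := auxC (p := p) (k := n) hn1 hnp (fun i hi => auxD i (by omega))
  obtain ⟨t, ht⟩ := auxF (p := p) hp2 hn1
  -- sums over range p and Ioo 0 p agree
  have hS : (∑ a ∈ range p, (a:ℤ)^n) = ∑ a ∈ Ioo 0 p, (a:ℤ)^n := by
    rw [Finset.range_eq_Ico, Finset.sum_eq_sum_Ico_succ_bot (by omega : 0 < p)]
    norm_num [zero_pow (show n ≠ 0 by omega), ← Finset.Ico_add_one_left_eq_Ioo]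
  rw [hS] at hC
  -- notation
  set β : ℚ_[p] := ((bernoulli n : ℚ) : ℚ_[p]) with hβ
  set S : ℤ := ∑ a ∈ Ioo 0 p, (a:ℤ)^n with hSdef
  have hppos : (0:ℝ) < (p:ℝ) := by exact_mod_cast hp.pos
  have hp1R : (1:ℝ) ≤ (p:ℝ) := by exact_mod_cast hp.one_lt.le
  -- step 1 : ‖(2^n-1) S - n p U‖ ≤ p^(-2)
  have h1 : ‖(((2^n - 1) * S - n * p * U : ℤ) : ℚ_[p])‖ ≤ (p:ℝ)^(-2:ℤ) := by
    rw [ht]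
    push_cast
    rw [norm_mul]
    calc ‖(p:ℚ_[p])^2‖ * ‖((t:ℤ):ℚ_[p])‖ ≤ ‖(p:ℚ_[p])^2‖ * 1 := by
          gcongr; exact Padic.norm_int_le_one t
      _ = (p:ℝ)^(-2:ℤ) := by rw [mul_one, Padic.norm_p_pow]; norm_num
  -- step 2
  have h2 : ‖((2^n - 1 : ℤ) : ℚ_[p]) * β * p - ((n * p * U : ℤ) : ℚ_[p])‖ ≤ (p:ℝ)^(-2:ℤ) := by
    have hsplit : ((2^n - 1 : ℤ) : ℚ_[p]) * β * p - ((n * p * U : ℤ) : ℚ_[p])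
        = ((2^n - 1 : ℤ) : ℚ_[p]) * (β * p - ((S:ℤ) : ℚ_[p]))
          + (((2^n - 1) * S - n * p * U : ℤ) : ℚ_[p]) := by push_cast; ring
    rw [hsplit]
    refine le_trans (IsUltrametricDist.norm_add_le_max _ _) (max_le ?_ h1)
    rw [norm_mul]
    calc ‖((2^n - 1 : ℤ) : ℚ_[p])‖ * ‖β * p - ((S:ℤ) : ℚ_[p])‖ ≤ 1 * ((p:ℝ)^(-2:ℤ)) :=
          mul_le_mul (Padic.norm_int_le_one _) hC (norm_nonneg _) zero_le_one
      _ = (p:ℝ)^(-2:ℤ) := one_mul _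
  -- step 3 : divide by p
  have hpne : (p:ℚ_[p]) ≠ 0 := by exact_mod_cast (Nat.cast_ne_zero.mpr hp.ne_zero : (p:ℚ_[p]) ≠ 0)
  have h3 : ‖((2^n - 1 : ℤ) : ℚ_[p]) * β - ((n * U : ℤ) : ℚ_[p])‖ ≤ (p:ℝ)^(-1:ℤ) := by
    have heq : ((2^n - 1 : ℤ) : ℚ_[p]) * β - ((n * U : ℤ) : ℚ_[p])
        = (((2^n - 1 : ℤ) : ℚ_[p]) * β * p - ((n * p * U : ℤ) : ℚ_[p])) * (p:ℚ_[p])⁻¹ := by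
      field_simp
      push_cast
      ring
    rw [heq, norm_mul, norm_inv, Padic.norm_p]
    rw [inv_inv]
    calc ‖((2^n-1:ℤ):ℚ_[p]) * β * p - ((n*p*U : ℤ):ℚ_[p])‖ * (p:ℝ)
        ≤ (p:ℝ)^(-2:ℤ) * (p:ℝ) := by gcongr
      _ = (p:ℝ)^(-1:ℤ) := by
          rw [show ((p:ℝ))^(-2:ℤ) = ((p:ℝ))^(-1:ℤ) * ((p:ℝ))^(-1:ℤ) by
              rw [← zpow_add₀ (by positivity : (p:ℝ) ≠ 0)]; norm_num]
          rw [mul_assoc, zpow_neg_one, inv_mul_cancel₀ (by positivity : (p:ℝ) ≠ 0), mul_one]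
  -- ‖n U‖ = 1
  have hnU : ¬ (p:ℤ) ∣ (n * U : ℤ) := by
    intro hdvd
    rcases (Int.Prime.dvd_mul' (by exact_mod_cast hp) hdvd) with hd | hd
    · have : (p:ℤ) ≤ n := Int.le_of_dvd (by exact_mod_cast hn1) hd
      have : (p:ℤ) ≤ (n:ℤ) := by exact_mod_cast this
      omega
    · exact hG hd
  have hnUnorm : ‖((n * U : ℤ) : ℚ_[p])‖ = 1 :=
    le_antisymm (Padic.norm_int_le_one _)
      (not_lt.mp (fun hlt => hnU (Padic.norm_intCast_lt_one_iff.mp hlt)))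
  -- step 4 : ‖(2^n-1) β‖ = 1
  have hlt1 : (p:ℝ)^(-1:ℤ) < 1 := by
    rw [zpow_neg_one]
    exact inv_lt_one_of_one_lt₀ (by exact_mod_cast hp.one_lt)
  have h4 : ‖((2^n - 1 : ℤ) : ℚ_[p]) * β‖ = 1 := by
    have hx : ((2^n - 1 : ℤ) : ℚ_[p]) * β
        = (((2^n - 1 : ℤ) : ℚ_[p]) * β - ((n * U : ℤ) : ℚ_[p])) + ((n * U : ℤ) : ℚ_[p]) := by ring
    have hne : ‖((2^n - 1 : ℤ) : ℚ_[p]) * β - ((n * U : ℤ) : ℚ_[p])‖ ≠ ‖((n * U : ℤ) : ℚ_[p])‖ := by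
      rw [hnUnorm]
      exact ne_of_lt (lt_of_le_of_lt h3 hlt1)
    rw [hx, Padic.add_eq_max_of_ne hne, hnUnorm]
    rw [max_eq_right (le_of_lt (lt_of_le_of_lt h3 (by rw [hnUnorm] at *; exact hlt1)))]
  -- step 5 : ‖β‖ ≥ 1
  have h5' : 1 ≤ ‖β‖ := by
    by_contra hcon
    push_neg at hcon
    have : ‖((2^n - 1 : ℤ) : ℚ_[p]) * β‖ < 1 := by
      rw [norm_mul]
      calc ‖((2^n-1:ℤ):ℚ_[p])‖ * ‖β‖ ≤ 1 * ‖β‖ := by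
            gcongr; exact Padic.norm_int_le_one _
        _ = ‖β‖ := one_mul _
        _ < 1 := hcon
    rw [h4] at this
    exact lt_irrefl _ this
  -- step 6 : conclude
  intro hdvd
  set q : ℚ := bernoulli n with hq
  have hdennd : ¬ (p:ℤ) ∣ (q.den : ℤ) := by
    intro hd
    have h1' : p ∣ q.num.natAbs := by
      have := Int.natAbs_dvd_natAbs.mpr hdvd
      simpa using this
    have h2' : p ∣ q.den := by exact_mod_cast hd
    have := Nat.dvd_gcd h1' h2'
    rw [q.reduced] at this
    exact Nat.Prime.one_lt hp |>.ne' (Nat.dvd_one.mp this)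
  have hdennorm : ‖((q.den : ℤ) : ℚ_[p])‖ = 1 :=
    le_antisymm (Padic.norm_int_le_one _)
      (not_lt.mp (fun hlt => hdennd (Padic.norm_intCast_lt_one_iff.mp hlt)))
  have hnumnorm : ‖((q.num : ℤ) : ℚ_[p])‖ < 1 :=
    Padic.norm_intCast_lt_one_iff.mpr hdvd
  have hβeq : β = ((q.num : ℤ) : ℚ_[p]) / ((q.den : ℤ) : ℚ_[p]) := by
    rw [hβ, Rat.cast_def]
    norm_cast
  have : ‖β‖ < 1 := by
    rw [hβeq, norm_div, hdennorm, div_one]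
    exact hnumnorm
  exact absurd h5' (not_le.mpr this)
end

section
/- If q ≢ 1 mod p (equivalently f > 1), then the Gauss sum g(𝔮) lies in ℤ[ζ_p]; that is, g(𝔮) is fixed by every automorphism of ℚ(ζ_p, ζ_q) that fixes ℚ(ζ_p). -/
set_option synthInstance.maxHeartbeats 1000000
set_option maxHeartbeats 1000000

set_option synthInstance.maxHeartbeats 4000000
set_option maxHeartbeats 4000000
/-- If `q ≢ 1 mod p` (equivalently `f > 1`), then the Gauss sum `g(𝔮)`
lies in `ℤ[ζ_p]`.

Setup: `O = ℤ[ζ_p]` is realized as the subalgebra of `ℂ` generated by a primitive `p`-th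
root of unity `ζp`, `𝔮` is a (maximal) prime ideal of `O` above `q` with residue field
`O⧸𝔮` of cardinality `q^f` (`f` the order of `q` mod `p`), `χ` is the inverse of the
`p`-th power residue character mod `𝔮` and `ψ(x) = ζq^(Tr(x))`; the Gauss sum is
`g(𝔮) = gaussSum χ ψ = Σ_x χ(x)·ψ(x)`. -/
theorem stmt_5 (p q : ℕ) (hp : p.Prime) (hq : q.Prime)
    (hoddp : Odd p) (hoddq : Odd q) (hpq : p ≠ q)
    (ζp ζq : ℂ) (hζp : IsPrimitiveRoot ζp p) (hζq : IsPrimitiveRoot ζq q)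
    (O : Subalgebra ℤ ℂ) (hO : O = Algebra.adjoin ℤ {ζp})
    (zp : O) (hzp : (zp : ℂ) = ζp)
    (f : ℕ) (hford : f = orderOf (q : ZMod p))
    (𝔮 : Ideal O) (h𝔮max : 𝔮.IsMaximal) (h𝔮q : ((q : ℕ) : O) ∈ 𝔮)
    [Fintype (O ⧸ 𝔮)] (hcard : Fintype.card (O ⧸ 𝔮) = q ^ f)
    [Algebra (ZMod q) (O ⧸ 𝔮)]
    (χ : MulChar (O ⧸ 𝔮) ℂ)
    (hχ : ∀ α : O, α ∉ 𝔮 → ∃ c : ℕ,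
      χ (Ideal.Quotient.mk 𝔮 α) * ζp ^ c = 1 ∧
      α ^ ((q ^ f - 1) / p) - zp ^ c ∈ 𝔮)
    (ψ : AddChar (O ⧸ 𝔮) ℂ)
    (hψ : ∀ x : O ⧸ 𝔮, ψ x = ζq ^ (Algebra.trace (ZMod q) (O ⧸ 𝔮) x).val)
    (hq1 : (q : ZMod p) ≠ 1) :
    gaussSum χ ψ ∈ Algebra.adjoin ℤ {ζp} := by
  haveI : Fact p.Prime := ⟨hp⟩
  haveI : Fact q.Prime := ⟨hq⟩
  haveI := h𝔮max
  haveI : NeZero q := ⟨hq.ne_zero⟩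
  haveI : Nontrivial (O ⧸ 𝔮) := Ideal.Quotient.nontrivial_iff.mpr h𝔮max.ne_top
  set A := Algebra.adjoin ℤ {ζp} with hA
  have hζpA : ζp ∈ A := Algebra.subset_adjoin rfl
  have hζpp : ζp ^ p = 1 := hζp.pow_eq_one
  have hζpne : ζp ≠ 0 := by
    intro h
    rw [h, zero_pow hp.ne_zero] at hζpp
    exact zero_ne_one hζpp
  -- χ takes values in A
  have hval : ∀ y : O ⧸ 𝔮, χ y ∈ A := by
    intro y
    obtain ⟨α, rfl⟩ := Ideal.Quotient.mk_surjective y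
    by_cases hα : α ∈ 𝔮
    · rw [Ideal.Quotient.eq_zero_iff_mem.mpr hα, χ.map_nonunit not_isUnit_zero]
      exact zero_mem A
    · obtain ⟨c, h1, -⟩ := hχ α hα
      have key : χ (Ideal.Quotient.mk 𝔮 α) = ζp ^ ((p - 1) * c) := by
        have h2 : ζp ^ ((p - 1) * c) * ζp ^ c = 1 := by
          rw [← pow_add]
          have : (p - 1) * c + c = p * c := by
            have hp1 : 1 ≤ p := hp.one_lt.le
            nlinarith [Nat.sub_add_cancel hp1]
          rw [this, pow_mul, hζpp, one_pow]
        have := h1.trans h2.symm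
        exact mul_right_cancel₀ (pow_ne_zero _ hζpne) this
      rw [key]
      exact pow_mem hζpA _
  -- χ is trivial on the image of (ZMod q)ˣ
  have hprime : ∀ b : ZMod q, b ≠ 0 → χ (algebraMap (ZMod q) (O ⧸ 𝔮) b) = 1 := by
    intro b hb
    set y := algebraMap (ZMod q) (O ⧸ 𝔮) b with hy
    have hy0 : y ≠ 0 := by
      rw [hy, map_ne_zero_iff _ (algebraMap (ZMod q) (O ⧸ 𝔮)).injective]
      exact hb
    have hyq : χ y ^ (q - 1) = 1 := by
      rw [← map_pow, hy, ← map_pow, ZMod.pow_card_sub_one_eq_one hb, map_one, map_one]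
    have hyp : χ y ^ p = 1 := by
      obtain ⟨α, hα⟩ := Ideal.Quotient.mk_surjective y
      have hαm : α ∉ 𝔮 := fun hm => hy0 (hα ▸ Ideal.Quotient.eq_zero_iff_mem.mpr hm)
      obtain ⟨c, h1, -⟩ := hχ α hαm
      rw [hα] at h1
      have h2 : (χ y * ζp ^ c) ^ p = 1 ^ p := by rw [h1]
      rw [mul_pow, one_pow, ← pow_mul, mul_comm c p, pow_mul, hζpp, one_pow, mul_one] at h2
      exact h2
    have hdvd1 : orderOf (χ y) ∣ p := orderOf_dvd_of_pow_eq_one hyp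
    have hdvd2 : orderOf (χ y) ∣ (q - 1) := orderOf_dvd_of_pow_eq_one hyq
    have hcop : ¬ p ∣ (q - 1) := by
      intro hd
      apply hq1
      have h0 : ((q - 1 : ℕ) : ZMod p) = 0 := (ZMod.natCast_eq_zero_iff _ _).mpr hd
      have he : ((q : ℕ) : ZMod p) = (((q - 1) + 1 : ℕ) : ZMod p) := by
        rw [Nat.sub_add_cancel hq.one_lt.le]
      rw [he, Nat.cast_add, Nat.cast_one, h0, zero_add]
    have hgcd : Nat.gcd p (q - 1) = 1 := (Nat.Prime.coprime_iff_not_dvd hp).mpr hcop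
    exact orderOf_eq_one_iff.mp
      (Nat.eq_one_of_dvd_one (hgcd ▸ Nat.dvd_gcd hdvd1 hdvd2))
  classical
  set T : (O ⧸ 𝔮) → ZMod q := fun x => Algebra.trace (ZMod q) (O ⧸ 𝔮) x with hT
  have hTlin : ∀ (b : ZMod q) (x : O ⧸ 𝔮),
      T (algebraMap (ZMod q) (O ⧸ 𝔮) b * x) = b * T x := by
    intro b x
    rw [hT]
    simp only []
    rw [← Algebra.smul_def, ← smul_eq_mul (α := ZMod q)]
    exact (Algebra.trace (ZMod q) (O ⧸ 𝔮)).map_smul b x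
  set S : ZMod q → ℂ := fun t => ∑ x ∈ Finset.filter (fun x => T x = t) Finset.univ, χ x
    with hS
  have hSA : ∀ t, S t ∈ A := fun t => sum_mem (fun x _ => hval x)
  -- fiberwise decomposition of the Gauss sum
  have hg : gaussSum χ ψ = ∑ t : ZMod q, S t * ζq ^ t.val := by
    rw [gaussSum, ← Finset.sum_fiberwise Finset.univ T (fun x => χ x * ψ x)]
    refine Finset.sum_congr rfl fun t _ => ?_
    rw [hS]
    simp only []
    rw [Finset.sum_mul]
    refine Finset.sum_congr rfl fun x hx => ?_
    have hTx : T x = t := (Finset.mem_filter.mp hx).2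
    rw [hψ x, ← hTx, hT]
  -- the fibers over nonzero t all have the same character sum
  have hS1 : ∀ t : ZMod q, t ≠ 0 → S t = S 1 := by
    intro t ht
    rw [hS]
    simp only []
    refine Finset.sum_nbij' (fun x => (algebraMap (ZMod q) (O ⧸ 𝔮) t⁻¹) * x)
      (fun x => (algebraMap (ZMod q) (O ⧸ 𝔮) t) * x) ?_ ?_ ?_ ?_ ?_
    · intro x hx
      have hTx : T x = t := (Finset.mem_filter.mp hx).2
      refine Finset.mem_filter.mpr ⟨Finset.mem_univ _, ?_⟩
      rw [hTlin, hTx, inv_mul_cancel₀ ht]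
    · intro x hx
      have hTx : T x = 1 := (Finset.mem_filter.mp hx).2
      refine Finset.mem_filter.mpr ⟨Finset.mem_univ _, ?_⟩
      rw [hTlin, hTx, mul_one]
    · intro x _
      rw [← mul_assoc, ← map_mul, mul_inv_cancel₀ ht, map_one, one_mul]
    · intro x _
      rw [← mul_assoc, ← map_mul, inv_mul_cancel₀ ht, map_one, one_mul]
    · intro x _
      rw [map_mul, hprime t⁻¹ (inv_ne_zero ht), one_mul]
  -- the sum of all q-th roots of unity vanishes
  have hsum0 : ∑ t : ZMod q, (ζq : ℂ) ^ t.val = 0 := by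
    have h1 : ∑ t : ZMod q, (ζq : ℂ) ^ t.val = ∑ i ∈ Finset.range q, ζq ^ i := by
      refine Finset.sum_nbij' (fun t => t.val) (fun i => (i : ZMod q)) ?_ ?_ ?_ ?_ ?_
      · intro t _; exact Finset.mem_range.mpr (ZMod.val_lt t)
      · intro i _; exact Finset.mem_univ _
      · intro t _; simp [ZMod.natCast_val, ZMod.cast_id]
      · intro i hi; exact ZMod.val_cast_of_lt (Finset.mem_range.mp hi)
      · intro t _; rfl
    rw [h1]
    exact hζq.geom_sum_eq_zero hq.one_lt
  have hfinal : gaussSum χ ψ = S 0 + S 1 * (-1) := by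
    rw [hg, ← Finset.add_sum_erase _ _ (Finset.mem_univ (0 : ZMod q))]
    rw [ZMod.val_zero, pow_zero, mul_one]
    congr 1
    have h2 : ∑ t ∈ Finset.univ.erase (0 : ZMod q), S t * ζq ^ t.val
        = S 1 * ∑ t ∈ Finset.univ.erase (0 : ZMod q), (ζq : ℂ) ^ t.val := by
      rw [Finset.mul_sum]
      refine Finset.sum_congr rfl fun t ht => ?_
      rw [hS1 t (Finset.ne_of_mem_erase ht)]
    have h3 : ∑ t ∈ Finset.univ.erase (0 : ZMod q), (ζq : ℂ) ^ t.val = -1 := by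
      have h4 := Finset.add_sum_erase Finset.univ (fun t : ZMod q => (ζq : ℂ) ^ t.val)
        (Finset.mem_univ (0 : ZMod q))
      rw [hsum0, ZMod.val_zero, pow_zero] at h4
      exact eq_neg_of_add_eq_zero_right h4
    rw [h2, h3]
  rw [hfinal]
  exact add_mem (hSA 0) (mul_mem (hSA 1) (neg_mem (one_mem A)))
end

section
/- In the group ring ℤ[G_p] one has the identity P(σ)·(σ − v) = p·Q(σ), where Q(σ) = Σ_{i=1}^{p−2} δ_i·σ^i with δ_i = (v^{−(i−1)} − v^{−i}·v)/p; each δ_i is a rational integer satisfying −p < δ_i ≤ 0, and the constant coefficient (v^{−(p−2)} − v)/p equals 0. -/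
/-- The representative in `{0,…,p-1}` of `v^{-n} mod p`. -/
def vI (p v n : ℕ) : ℕ := (((v : ZMod p)⁻¹) ^ n).val

/-- The integer `δ_i = (v^{-(i-1)} - v^{-i}·v)/p` (an exact quotient). -/
def delta (p v i : ℕ) : ℤ := ((vI p v (i - 1) : ℤ) - (vI p v i : ℤ) * v) / p

open Finset MonoidAlgebra

lemma sum_range_cast {n : ℕ} [NeZero n] {M : Type*} [AddCommMonoid M] (f : ZMod n → M) :
    ∑ i ∈ Finset.range n, f (i : ZMod n) = ∑ x : ZMod n, f x := by
  refine Finset.sum_nbij' (fun i => (i : ZMod n)) (fun x => x.val) (fun a _ => mem_univ _)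
    (fun x _ => mem_range.2 (ZMod.val_lt x)) ?_ ?_ (fun a _ => rfl)
  · intro a ha
    exact ZMod.val_cast_of_lt (mem_range.1 ha)
  · intro x _
    exact ZMod.natCast_rightInverse x

/-- In the group ring `ℤ[G_p]`, where `G_p = Gal(ℚ(ζ_p)/ℚ)` is cyclic of
order `p - 1` generated by `σ`, one has `P(σ)·(σ - v) = p·Q(σ)` where
`P(σ) = Σ_{i=0}^{p-2} v^{-i}·σ^i` and `Q(σ) = Σ_{i=1}^{p-2} δ_i·σ^i` with
`δ_i = (v^{-(i-1)} - v^{-i}·v)/p`; each `δ_i` is a rational integer with `-p < δ_i ≤ 0`,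
and the constant coefficient `(v^{-(p-2)} - v)/p` equals `0`.

`G_p` is modelled as `Multiplicative (ZMod (p-1))`, `σ` corresponding to
`Multiplicative.ofAdd 1`. -/
theorem stmt_9 (p v : ℕ) (hp : p.Prime) (hodd : Odd p)
    (hv : IsPrimitiveRoot (v : ZMod p) (p - 1)) (hvlt : v < p) :
    ((∑ i ∈ Finset.range (p - 1),
        MonoidAlgebra.single (Multiplicative.ofAdd (i : ZMod (p - 1))) (vI p v i : ℤ)) *
      (MonoidAlgebra.single (Multiplicative.ofAdd (1 : ZMod (p - 1))) (1 : ℤ) -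
        MonoidAlgebra.single (Multiplicative.ofAdd (0 : ZMod (p - 1))) (v : ℤ)) =
      (p : ℤ) • ∑ i ∈ Finset.Icc 1 (p - 2),
        MonoidAlgebra.single (Multiplicative.ofAdd (i : ZMod (p - 1))) (delta p v i)) ∧
    (∀ i ∈ Finset.Icc 1 (p - 2), -(p : ℤ) < delta p v i ∧ delta p v i ≤ 0) ∧
    ((vI p v (p - 2) : ℤ) - (v : ℤ)) / p = 0 := by
  haveI : Fact p.Prime := ⟨hp⟩
  have hp3 : 3 ≤ p := by
    have h2 := hp.two_le
    have h1 : p % 2 = 1 := Nat.odd_iff.mp hodd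
    omega
  haveI hne : NeZero (p - 1) := ⟨by omega⟩
  have hv0 : (v : ZMod p) ≠ 0 := by
    intro h
    have h1 := hv.pow_eq_one
    rw [h, zero_pow (by omega : p - 1 ≠ 0)] at h1
    exact zero_ne_one h1
  set u : ZMod p := (v : ZMod p)⁻¹ with hu
  have hu0 : u ≠ 0 := inv_ne_zero hv0
  have huv : u * v = 1 := inv_mul_cancel₀ hv0
  have hun : u ^ (p - 1) = 1 := by
    rw [hu, inv_pow, hv.pow_eq_one, inv_one]
  have hvI_lt : ∀ k, vI p v k < p := fun k => ZMod.val_lt _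
  have hvI_pos : ∀ k, 0 < vI p v k := by
    intro k
    rw [vI]
    exact Nat.pos_of_ne_zero fun h => pow_ne_zero k hu0 ((ZMod.val_eq_zero _).1 h)
  have hv1 : 1 ≤ v := by
    rcases Nat.eq_zero_or_pos v with h | h
    · exfalso; apply hv0; rw [h]; simp
    · exact h
  have hcastvI : ∀ k, ((vI p v k : ℕ) : ZMod p) = u ^ k := by
    intro k
    rw [vI, ZMod.natCast_val, ZMod.cast_id]
  have hdvd : ∀ i : ℕ, 1 ≤ i → (p : ℤ) ∣ ((vI p v (i - 1) : ℤ) - (vI p v i : ℤ) * v) := by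
    intro i hi
    obtain ⟨j, rfl⟩ : ∃ j, i = j + 1 := ⟨i - 1, by omega⟩
    rw [← ZMod.intCast_zmod_eq_zero_iff_dvd]
    push_cast
    rw [hcastvI, hcastvI, pow_succ, mul_assoc, huv, mul_one, sub_self]
  have hPdelta : ∀ i : ℕ, 1 ≤ i →
      (p : ℤ) * delta p v i = (vI p v (i - 1) : ℤ) - (vI p v i : ℤ) * v :=
    fun i hi => Int.mul_ediv_cancel' (hdvd i hi)
  have hbounds : ∀ i : ℕ, 1 ≤ i → -(p : ℤ) < delta p v i ∧ delta p v i ≤ 0 := by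
    intro i hi
    have h1 : (vI p v (i - 1) : ℤ) < p := by exact_mod_cast hvI_lt _
    have h2 : (vI p v i : ℤ) < p := by exact_mod_cast hvI_lt _
    have h3 : (v : ℤ) < p := by exact_mod_cast hvlt
    have h4 : 1 ≤ (vI p v i : ℤ) := by exact_mod_cast hvI_pos i
    have h5 : 1 ≤ (v : ℤ) := by exact_mod_cast hv1
    have h6 : 0 ≤ (vI p v (i - 1) : ℤ) := Int.natCast_nonneg _
    have hp0 : (0 : ℤ) < p := by exact_mod_cast hp.pos
    have hP := hPdelta i hi
    constructor
    · have hlt : (p : ℤ) * (-(p : ℤ)) < p * delta p v i := by nlinarith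
      exact lt_of_mul_lt_mul_left hlt (le_of_lt hp0)
    · have hlt : (p : ℤ) * delta p v i < p * 1 := by nlinarith
      have := lt_of_mul_lt_mul_left hlt (le_of_lt hp0)
      omega
  have hlast : vI p v (p - 2) = v := by
    have h : u ^ (p - 2) * u = 1 := by
      rw [← pow_succ]
      have e : p - 2 + 1 = p - 1 := by omega
      rw [e, hun]
    have h2 : u ^ (p - 2) = (v : ZMod p) := by
      have h3 := eq_inv_of_mul_eq_one_left h
      rw [h3, hu, inv_inv]
    rw [vI, h2, ZMod.val_cast_of_lt hvlt]
  refine ⟨?_, fun i hi => hbounds i (mem_Icc.1 hi).1, by rw [hlast, sub_self, Int.zero_ediv]⟩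
  set n := p - 1 with hn
  set W : ZMod n → ℤ := fun x => (vI p v x.val : ℤ) with hW
  have hWcast : ∀ i : ℕ, i < n → W (i : ZMod n) = (vI p v i : ℤ) := by
    intro i hi
    simp only [hW, ZMod.val_cast_of_lt hi]
  have hneg : ((p - 2 : ℕ) : ZMod n) = -1 := by
    have h1 : ((p - 2 : ℕ) : ZMod n) + 1 = 0 := by
      have e : ((p - 2 : ℕ) : ZMod n) + 1 = ((p - 2 + 1 : ℕ) : ZMod n) := by push_cast; ring
      rw [e]
      have e2 : p - 2 + 1 = n := by omega
      rw [e2, ZMod.natCast_self]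
    linear_combination h1
  have hC0 : W (0 - 1) - W 0 * v = 0 := by
    have e1 : (0 : ZMod n) - 1 = ((p - 2 : ℕ) : ZMod n) := by rw [hneg]; ring
    have e2 : W ((p - 2 : ℕ) : ZMod n) = (v : ℤ) := by
      rw [hWcast (p - 2) (by omega), hlast]
    have e3 : W 0 = 1 := by
      haveI : Fact (1 < p) := ⟨by omega⟩
      have e : (0 : ZMod n) = ((0 : ℕ) : ZMod n) := by norm_cast
      rw [e, hWcast 0 (by omega)]
      simp [vI, ZMod.val_one]
    rw [e1, e2, e3]
    ring
  have LHS : (∑ i ∈ Finset.range n,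
        MonoidAlgebra.single (Multiplicative.ofAdd (i : ZMod n)) (vI p v i : ℤ)) *
      (MonoidAlgebra.single (Multiplicative.ofAdd (1 : ZMod n)) (1 : ℤ) -
        MonoidAlgebra.single (Multiplicative.ofAdd (0 : ZMod n)) (v : ℤ)) =
      ∑ y : ZMod n, MonoidAlgebra.single (Multiplicative.ofAdd y) (W (y - 1) - W y * v) := by
    rw [mul_sub, Finset.sum_mul, Finset.sum_mul]
    have s1 : ∑ i ∈ Finset.range n,
        MonoidAlgebra.single (Multiplicative.ofAdd (i : ZMod n)) (vI p v i : ℤ) *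
          MonoidAlgebra.single (Multiplicative.ofAdd (1 : ZMod n)) (1 : ℤ) =
        ∑ y : ZMod n, MonoidAlgebra.single (Multiplicative.ofAdd y) (W (y - 1)) := by
      have step : ∀ i ∈ Finset.range n,
          MonoidAlgebra.single (Multiplicative.ofAdd (i : ZMod n)) (vI p v i : ℤ) *
            MonoidAlgebra.single (Multiplicative.ofAdd (1 : ZMod n)) (1 : ℤ) =
          (fun x : ZMod n =>
            MonoidAlgebra.single (Multiplicative.ofAdd (x + 1)) (W x)) (i : ZMod n) := by
        intro i hi
        simp only [MonoidAlgebra.single_mul_single, mul_one, hWcast i (mem_range.1 hi),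
          ← ofAdd_add]
      rw [Finset.sum_congr rfl step, sum_range_cast
        (fun x : ZMod n => MonoidAlgebra.single (Multiplicative.ofAdd (x + 1)) (W x))]
      exact Fintype.sum_equiv (Equiv.addRight (1 : ZMod n)) _ _ (fun x => by simp)
    have s2 : ∑ i ∈ Finset.range n,
        MonoidAlgebra.single (Multiplicative.ofAdd (i : ZMod n)) (vI p v i : ℤ) *
          MonoidAlgebra.single (Multiplicative.ofAdd (0 : ZMod n)) (v : ℤ) =
        ∑ y : ZMod n, MonoidAlgebra.single (Multiplicative.ofAdd y) (W y * v) := by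
      have step : ∀ i ∈ Finset.range n,
          MonoidAlgebra.single (Multiplicative.ofAdd (i : ZMod n)) (vI p v i : ℤ) *
            MonoidAlgebra.single (Multiplicative.ofAdd (0 : ZMod n)) (v : ℤ) =
          (fun x : ZMod n =>
            MonoidAlgebra.single (Multiplicative.ofAdd x) (W x * v)) (i : ZMod n) := by
        intro i hi
        simp only [MonoidAlgebra.single_mul_single, hWcast i (mem_range.1 hi),
          ← ofAdd_add, add_zero]
      rw [Finset.sum_congr rfl step, sum_range_cast
        (fun x : ZMod n => MonoidAlgebra.single (Multiplicative.ofAdd x) (W x * v))]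
    rw [s1, s2, ← Finset.sum_sub_distrib]
    exact Finset.sum_congr rfl fun y _ => (MonoidAlgebra.single_sub _ _ _).symm
  rw [LHS, Finset.smul_sum]
  have rstep : ∀ i ∈ Finset.Icc 1 (p - 2),
      (p : ℤ) • MonoidAlgebra.single (Multiplicative.ofAdd ((i : ℕ) : ZMod n)) (delta p v i) =
      (fun y : ZMod n => MonoidAlgebra.single (Multiplicative.ofAdd y) (W (y - 1) - W y * v))
        ((i : ℕ) : ZMod n) := by
    intro i hi
    obtain ⟨hi1, hi2⟩ := mem_Icc.1 hi
    simp only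
    rw [MonoidAlgebra.smul_single', hPdelta i hi1]
    congr 1
    have e1 : ((i : ZMod n)) - 1 = ((i - 1 : ℕ) : ZMod n) := by
      have e : ((i - 1 : ℕ) : ZMod n) + 1 = ((i - 1 + 1 : ℕ) : ZMod n) := by push_cast; ring
      have h2 : i - 1 + 1 = i := by omega
      rw [sub_eq_iff_eq_add, e, h2]
    rw [e1, hWcast (i - 1) (by omega), hWcast i (by omega)]
  rw [Finset.sum_congr rfl rstep,
    ← sum_range_cast (fun y : ZMod n =>
      MonoidAlgebra.single (Multiplicative.ofAdd y) (W (y - 1) - W y * v)),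
    show Finset.range n = Finset.range ((p - 2) + 1) by rw [hn]; congr 1; omega,
    Finset.sum_range_succ',
    show Finset.Icc 1 (p - 2) = Finset.Ico 1 ((p - 2) + 1) from (Finset.Ico_add_one_right_eq_Icc _ _).symm,
    Finset.sum_Ico_eq_sum_range]
  simp only [Nat.add_sub_cancel, Nat.cast_zero, hC0, MonoidAlgebra.single_zero, add_zero]
  exact Finset.sum_congr rfl fun i _ => by rw [Nat.add_comm 1 i]
end

section
/- If the multiplicative order f of q modulo p is even, then there exists a natural number w such that g(𝔮) = ±ζ_p^w·q^{f/2}. -/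
set_option synthInstance.maxHeartbeats 1000000
set_option maxHeartbeats 1000000

set_option maxHeartbeats 1000000 in
theorem stmt10_aux (p q f : ℕ) (hp : p.Prime) (hq : q.Prime) (hoddp : Odd p)
    (hqp0 : (q : ZMod p) ≠ 0) (hford : f = orderOf (q : ZMod p)) (hfeven : Even f)
    (ζp ζq : ℂ) (hζp : IsPrimitiveRoot ζp p) (hζq : IsPrimitiveRoot ζq q)
    (F : Type*) [Field F] [Fintype F] [Algebra (ZMod q) F]
    (hcard : Fintype.card F = q ^ f)
    (χ : MulChar F ℂ) (z : F) (hz : z ^ p = 1)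
    (hχ' : ∀ x : F, x ≠ 0 → ∃ c : ℕ, χ x * ζp ^ c = 1 ∧ x ^ ((q ^ f - 1) / p) = z ^ c)
    (ψ : AddChar F ℂ) (hψ : ∀ x : F, ψ x = ζq ^ (Algebra.trace (ZMod q) F x).val) :
    ∃ w : ℕ, gaussSum χ ψ = ζp ^ w * (q : ℂ) ^ (f / 2) ∨
      gaussSum χ ψ = -(ζp ^ w * (q : ℂ) ^ (f / 2)) := by
  classical
  haveI : Fact p.Prime := ⟨hp⟩
  haveI : Fact q.Prime := ⟨hq⟩
  -- basic arithmetic facts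
  have hf0 : f ≠ 0 := by
    have h1 : (q : ZMod p) ^ (p - 1) = 1 := ZMod.pow_card_sub_one_eq_one hqp0
    have h2 : IsOfFinOrder (q : ZMod p) :=
      isOfFinOrder_iff_pow_eq_one.mpr ⟨p - 1, by have := hp.one_lt; omega, h1⟩
    rw [hford]
    exact (orderOf_pos_iff.mpr h2).ne'
  have hq_pow_f : ((q : ZMod p)) ^ f = 1 := by rw [hford]; exact pow_orderOf_eq_one _
  have hqf1 : 1 < q ^ f := Nat.one_lt_pow hf0 hq.one_lt
  have hdvd : p ∣ q ^ f - 1 := by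
    have h0 : ((q ^ f - 1 : ℕ) : ZMod p) = 0 := by
      rw [Nat.cast_sub hqf1.le, Nat.cast_pow, hq_pow_f, Nat.cast_one, sub_self]
    exact (CharP.cast_eq_zero_iff (ZMod p) p _).mp h0
  -- q^(f/2) ≡ -1 mod p
  have hf2 : f / 2 + f / 2 = f := by
    obtain ⟨k, hk⟩ := hfeven; omega
  have hhalf : (q : ZMod p) ^ (f / 2) = -1 := by
    have hx2 : ((q : ZMod p) ^ (f / 2)) * ((q : ZMod p) ^ (f / 2)) = 1 := by
      rw [← pow_add, hf2, hq_pow_f]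
    have hx1 : (q : ZMod p) ^ (f / 2) ≠ 1 := by
      intro h
      have hdv : orderOf (q : ZMod p) ∣ f / 2 := orderOf_dvd_of_pow_eq_one h
      rw [← hford] at hdv
      have hle : f ≤ f / 2 := Nat.le_of_dvd (by omega) hdv
      omega
    have hfact : ((q : ZMod p) ^ (f / 2) - 1) * ((q : ZMod p) ^ (f / 2) + 1) = 0 := by
      linear_combination hx2
    rcases mul_eq_zero.mp hfact with h | h
    · exact absurd (sub_eq_zero.mp h) hx1
    · linear_combination h
  -- characteristic of F
  haveI hcharF : CharP F q :=
    charP_of_injective_algebraMap (algebraMap (ZMod q) F).injective q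
  haveI : ExpChar F q := ExpChar.prime hq
  -- χ takes values in p-th roots of unity on nonzero elements
  have hχp : ∀ x : F, x ≠ 0 → χ x ^ p = 1 := by
    intro x hx
    obtain ⟨c, hc1, -⟩ := hχ' x hx
    have h2 := congrArg (· ^ p) hc1
    simp only [mul_pow, one_pow] at h2
    rwa [← pow_mul, mul_comm c p, pow_mul, hζp.pow_eq_one, one_pow, mul_one] at h2
  -- χ(-1) = 1
  have hm1 : (-1 : F) ≠ 0 := by simp
  have hχsq : χ (-1) * χ (-1) = 1 := by
    rw [← map_mul, neg_mul_neg, one_mul, map_one]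
  have hχm1 : χ (-1) = 1 := by
    obtain ⟨k, hk⟩ := hoddp
    have hp1 := hχp (-1) hm1
    calc χ (-1) = (χ (-1) * χ (-1)) ^ k * χ (-1) := by rw [hχsq, one_pow, one_mul]
    _ = χ (-1) ^ p := by rw [← pow_two, ← pow_mul, ← pow_succ, hk]
    _ = 1 := hp1
  -- χ is nontrivial
  have hχne : χ ≠ 1 := by
    intro h1
    obtain ⟨u, hu⟩ := IsCyclic.exists_generator (α := Fˣ)
    have htop : Subgroup.zpowers u = ⊤ := (Subgroup.eq_top_iff' _).mpr hu
    have horder : orderOf u = q ^ f - 1 := by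
      calc orderOf u = Nat.card (Subgroup.zpowers u) := (Nat.card_zpowers u).symm
      _ = Nat.card Fˣ := by rw [htop]; exact Subgroup.card_top
      _ = Nat.card F - 1 := Nat.card_units F
      _ = q ^ f - 1 := by rw [Nat.card_eq_fintype_card, hcard]
    obtain ⟨c, hc1, hc2⟩ := hχ' (u : F) (Units.ne_zero u)
    rw [h1, MulChar.one_apply u.isUnit, one_mul] at hc1
    obtain ⟨d, hd⟩ := (hζp.pow_eq_one_iff_dvd c).mp hc1
    have hzc : z ^ c = 1 := by rw [hd, pow_mul, hz, one_pow]
    rw [hzc] at hc2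
    have huk : u ^ ((q ^ f - 1) / p) = 1 := Units.ext (by push_cast [hc2]; rfl)
    have hdvd2 : q ^ f - 1 ∣ (q ^ f - 1) / p := by
      have h5 := orderOf_dvd_of_pow_eq_one huk
      rwa [horder] at h5
    have hk_pos : 0 < (q ^ f - 1) / p :=
      Nat.div_pos (Nat.le_of_dvd (by omega) hdvd) hp.pos
    have hk_lt : (q ^ f - 1) / p < q ^ f - 1 := Nat.div_lt_self (by omega) hp.one_lt
    have := Nat.le_of_dvd hk_pos hdvd2
    omega
  -- ψ is primitive
  obtain ⟨x0, hx0⟩ := Algebra.trace_surjective (ZMod q) F 1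
  have hψne : ψ ≠ 1 := by
    intro h
    have h2 := hψ x0
    rw [h, AddChar.one_apply, hx0, ZMod.val_one, pow_one] at h2
    exact hζq.ne_one hq.one_lt h2.symm
  have hψprim : ψ.IsPrimitive := AddChar.IsPrimitive.of_ne_one hψne
  -- Frobenius invariance of the trace
  have hbij : Function.Bijective (frobenius F q) :=
    ⟨frobenius_inj _ q, Finite.surjective_of_injective (frobenius_inj _ q)⟩
  have htr : ∀ x : F, Algebra.trace (ZMod q) F (x ^ q) = Algebra.trace (ZMod q) F x := by
    intro x
    let e : F ≃+* F := RingEquiv.ofBijective (frobenius F q) hbij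
    have hcomm : ∀ c : ZMod q, e (algebraMap (ZMod q) F c) = algebraMap (ZMod q) F c := by
      intro c
      show frobenius F q (algebraMap (ZMod q) F c) = _
      rw [frobenius_def, ← map_pow, ZMod.pow_card]
    let eA : F ≃ₐ[ZMod q] F := AlgEquiv.ofRingEquiv hcomm
    have h4 : eA x = x ^ q := rfl
    have h5 := Algebra.trace_eq_of_algEquiv eA x
    rwa [h4] at h5
  have hψfrob : ∀ x : F, ψ (x ^ q) = ψ x := by
    intro x; rw [hψ, hψ, htr]
  -- Gauss sum is invariant under χ ↦ χ^q
  have gstep : ∀ χ' : MulChar F ℂ, gaussSum (χ' ^ q) ψ = gaussSum χ' ψ := by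
    intro χ'
    unfold gaussSum
    refine Fintype.sum_bijective (frobenius F q) hbij _ _ ?_
    intro x
    rw [MulChar.pow_apply' χ' hq.ne_zero, frobenius_def, ← map_pow, hψfrob]
  have giter : ∀ n : ℕ, gaussSum (χ ^ q ^ n) ψ = gaussSum χ ψ := by
    intro n
    induction n with
    | zero => rw [pow_zero, pow_one]
    | succ n ih => rw [pow_succ, pow_mul, gstep, ih]
  -- χ^(q^(f/2)) = χ⁻¹
  have hpmid : p ∣ q ^ (f / 2) + 1 := by
    have h0 : ((q ^ (f / 2) + 1 : ℕ) : ZMod p) = 0 := by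
      push_cast
      rw [hhalf]; ring
    exact (CharP.cast_eq_zero_iff (ZMod p) p _).mp h0
  have hχinv : χ ^ q ^ (f / 2) = χ⁻¹ := by
    apply MulChar.ext
    intro a
    rw [MulChar.pow_apply_coe, MulChar.inv_apply_eq_inv']
    obtain ⟨t, ht⟩ := hpmid
    have h1 : χ (a : F) ^ (q ^ (f / 2) + 1) = 1 := by
      rw [ht, pow_mul, hχp _ a.ne_zero, one_pow]
    have h2 : χ (a : F) ^ q ^ (f / 2) * χ (a : F) = 1 := by
      rw [← pow_succ, h1]
    exact eq_inv_of_mul_eq_one_left h2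
  have hjump : gaussSum χ ψ = gaussSum χ⁻¹ ψ := by
    rw [← hχinv]
    exact (giter (f / 2)).symm
  -- g² = q^f
  have hmul := gaussSum_mul_gaussSum_eq_card hχne hψprim
  have hinvpsi : gaussSum χ⁻¹ ψ⁻¹ = gaussSum χ⁻¹ ψ := by
    have h := mul_gaussSum_inv_eq_gaussSum χ⁻¹ ψ
    rwa [MulChar.inv_apply_eq_inv', hχm1, inv_one, one_mul] at h
  have hsq : gaussSum χ ψ * gaussSum χ ψ = (q : ℂ) ^ f := by
    nth_rewrite 2 [hjump]
    rw [← hinvpsi, hmul, hcard, Nat.cast_pow]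
  -- conclude
  refine ⟨0, ?_⟩
  have hr : (q : ℂ) ^ (f / 2) * (q : ℂ) ^ (f / 2) = (q : ℂ) ^ f := by
    rw [← pow_add, hf2]
  have hz2 : (gaussSum χ ψ - (q : ℂ) ^ (f / 2)) * (gaussSum χ ψ + (q : ℂ) ^ (f / 2)) = 0 := by
    have hexp : (gaussSum χ ψ - (q : ℂ) ^ (f / 2)) * (gaussSum χ ψ + (q : ℂ) ^ (f / 2))
        = gaussSum χ ψ * gaussSum χ ψ - (q : ℂ) ^ (f / 2) * (q : ℂ) ^ (f / 2) := by ring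
    rw [hexp, hsq, hr, sub_self]
  rcases mul_eq_zero.mp hz2 with h | h
  · left
    rw [pow_zero, one_mul]
    exact sub_eq_zero.mp h
  · right
    rw [pow_zero, one_mul]
    exact add_eq_zero_iff_eq_neg.mp h

set_option maxHeartbeats 40000000
set_option synthInstance.maxHeartbeats 4000000

/-- If the multiplicative order `f` of `q` modulo `p` is even, then there
exists a natural number `w` such that `g(𝔮) = ±ζ_p^w·q^(f/2)`.

Setup: `O = ℤ[ζ_p]` is realized as the subalgebra of `ℂ` generated by a primitive `p`-th
root of unity `ζp`, `𝔮` is a (maximal) prime ideal of `O` above `q` with residue field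
`O⧸𝔮` of cardinality `q^f` (`f` the order of `q` mod `p`), `χ` is the inverse of the
`p`-th power residue character mod `𝔮` and `ψ(x) = ζq^(Tr(x))`; the Gauss sum is
`g(𝔮) = gaussSum χ ψ = Σ_x χ(x)·ψ(x)`. -/
theorem stmt_10 (p q : ℕ) (hp : p.Prime) (hq : q.Prime)
    (hoddp : Odd p) (hoddq : Odd q) (hpq : p ≠ q)
    (ζp ζq : ℂ) (hζp : IsPrimitiveRoot ζp p) (hζq : IsPrimitiveRoot ζq q)
    (O : Subalgebra ℤ ℂ) (hO : O = Algebra.adjoin ℤ {ζp})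
    (zp : O) (hzp : (zp : ℂ) = ζp)
    (f : ℕ) (hford : f = orderOf (q : ZMod p))
    (𝔮 : Ideal O) (h𝔮max : 𝔮.IsMaximal) (h𝔮q : ((q : ℕ) : O) ∈ 𝔮)
    [Fintype (O ⧸ 𝔮)] (hcard : Fintype.card (O ⧸ 𝔮) = q ^ f)
    [Algebra (ZMod q) (O ⧸ 𝔮)]
    (χ : MulChar (O ⧸ 𝔮) ℂ)
    (hχ : ∀ α : O, α ∉ 𝔮 → ∃ c : ℕ,
      χ (Ideal.Quotient.mk 𝔮 α) * ζp ^ c = 1 ∧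
      α ^ ((q ^ f - 1) / p) - zp ^ c ∈ 𝔮)
    (ψ : AddChar (O ⧸ 𝔮) ℂ)
    (hψ : ∀ x : O ⧸ 𝔮, ψ x = ζq ^ (Algebra.trace (ZMod q) (O ⧸ 𝔮) x).val)
    (hfeven : Even f) :
    ∃ w : ℕ, gaussSum χ ψ = ζp ^ w * (q : ℂ) ^ (f / 2) ∨
      gaussSum χ ψ = -(ζp ^ w * (q : ℂ) ^ (f / 2)) := by
  classical
  haveI : Fact p.Prime := ⟨hp⟩
  haveI := h𝔮max
  letI : Field (O ⧸ 𝔮) := Ideal.Quotient.field 𝔮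
  have hqp0 : (q : ZMod p) ≠ 0 := by
    rw [Ne, CharP.cast_eq_zero_iff (ZMod p) p q]
    exact fun h => hpq ((Nat.prime_dvd_prime_iff_eq hp hq).mp h)
  have hzp_pow : zp ^ p = 1 := by
    have h1 : ((zp ^ p : O) : ℂ) = ((1 : O) : ℂ) := by
      push_cast
      rw [hzp, hζp.pow_eq_one]
    exact Subtype.coe_injective h1
  have hz : (Ideal.Quotient.mk 𝔮 zp) ^ p = 1 := by
    rw [← map_pow, hzp_pow, map_one]
  have hχ2 : ∀ x : O ⧸ 𝔮, x ≠ 0 → ∃ c : ℕ, χ x * ζp ^ c = 1 ∧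
      x ^ ((q ^ f - 1) / p) = (Ideal.Quotient.mk 𝔮 zp) ^ c := by
    intro x hx
    obtain ⟨α, rfl⟩ := Ideal.Quotient.mk_surjective x
    have hα : α ∉ 𝔮 := fun h => hx (Ideal.Quotient.eq_zero_iff_mem.mpr h)
    obtain ⟨c, hc1, hc2⟩ := hχ α hα
    refine ⟨c, hc1, ?_⟩
    rw [← map_pow, ← map_pow]
    exact Ideal.Quotient.eq.mpr hc2
  exact stmt10_aux p q f hp hq hoddp hqp0 hford hfeven ζp ζq hζp hζq (O ⧸ 𝔮) hcard
    χ (Ideal.Quotient.mk 𝔮 zp) hz hχ2 ψ hψ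
end

section
/- Let 𝔮 be a non-principal prime ideal of ℤ[ζ_p] of inertial degree f above an odd prime q ≠ p with ideal class Cl(𝔮) ∈ C_p^−. Suppose p divides q^f − 1 exactly (p | q^f − 1 but p² ∤ q^f − 1), and let A be a singular primary number with A·ℤ[ζ_p] = 𝔮^p. Then A ≢ 1 mod π^{2p−1}. -/
open NumberField
open scoped nonZeroDivisors

private lemma stmt11_aux_norm (P : ℕ+) (hP : (P : ℕ).Prime) (hP2 : (P : ℕ) ≠ 2)
    (K : Type*) [Field K] [NumberField K] [IsCyclotomicExtension {(P : ℕ)} ℚ K]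
    (z : K) (hz : IsPrimitiveRoot z (P : ℕ)) :
    Algebra.norm ℚ (z - 1) = ((P : ℕ) : ℚ) := by
  haveI : Fact (P : ℕ).Prime := ⟨hP⟩
  have hirr := Polynomial.cyclotomic.irreducible_rat P.pos
  have h2 : P ≠ 2 := fun h => hP2 (by rw [h]; rfl)
  have := hz.norm_sub_one_of_prime_ne_two' hirr hP2
  simpa using this

/-- Let `𝔮` be a non-principal prime ideal of `ℤ[ζ_p]` of inertial degree
`f` above an odd prime `q ≠ p` with `Cl(𝔮) ∈ C_p⁻`.  Suppose `p` divides `q^f - 1`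
exactly, and let `A` be a singular primary number with `A·ℤ[ζ_p] = 𝔮^p`.  Then
`A ≢ 1 mod π^(2p-1)`.

Membership of `Cl(𝔮)` in the relative `p`-class group `C_p⁻` is expressed by: the order
of `Cl(𝔮)` is a power of `p` (membership in the `p`-class group) and `Cl(𝔮)` is
annihilated by `1 + conj`, `conj` being complex conjugation (`ζ ↦ ζ^(p-1) = ζ⁻¹`); for
`p` odd this is exactly the kernel of the norm map to the class group of `K_p⁺`. -/
theorem stmt_11 (p : ℕ) (hp : p.Prime) (hoddp : Odd p)
    (K : Type*) [Field K] [NumberField K]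
    [IsCyclotomicExtension {p} ℚ K]
    (ζ : 𝓞 K) (hζ : IsPrimitiveRoot ζ p)
    (conj : 𝓞 K ≃ₐ[ℤ] 𝓞 K) (hconj : conj ζ = ζ ^ (p - 1))
    (q : ℕ) (hq : q.Prime) (hoddq : Odd q) (hqp : q ≠ p)
    (𝔮 : Ideal (𝓞 K)) (h𝔮prime : 𝔮.IsPrime) (h𝔮bot : 𝔮 ≠ ⊥)
    (h𝔮q : (q : 𝓞 K) ∈ 𝔮)
    (f : ℕ) (hf : Nat.card (𝓞 K ⧸ 𝔮) = q ^ f)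
    (h𝔮np : ¬ 𝔮.IsPrincipal)
    (hcl : ∀ I J : (Ideal (𝓞 K))⁰, (I : Ideal (𝓞 K)) = 𝔮 →
      (J : Ideal (𝓞 K)) = Ideal.map conj 𝔮 →
      (∃ k : ℕ, orderOf (ClassGroup.mk0 I) = p ^ k) ∧
        ClassGroup.mk0 I * ClassGroup.mk0 J = 1)
    (hexact : p ∣ q ^ f - 1 ∧ ¬ p ^ 2 ∣ q ^ f - 1)
    (A : 𝓞 K) (hA0 : A ≠ 0)
    (hAnp : ¬ ∃ B : K, B ^ p = algebraMap (𝓞 K) K A)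
    (hAspan : Ideal.span {A} = 𝔮 ^ p)
    (hAprim : ∃ a : ℤ, ¬ (p : ℤ) ∣ a ∧ A - (a : 𝓞 K) ^ p ∈ Ideal.span {ζ - 1} ^ p) :
    A - 1 ∉ Ideal.span {ζ - 1} ^ (2 * p - 1) := by
  intro hmem
  haveI : Fact p.Prime := ⟨hp⟩
  have hp2 : p ≠ 2 := by rintro rfl; simp [Nat.odd_iff] at hoddp
  have hp3 : 3 ≤ p := by
    have := hp.two_le
    omega
  haveI := IsCyclotomicExtension.isGalois {p} ℚ K
  haveI : NeZero p := ⟨hp.ne_zero⟩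
  set n₀ := 2 * p - 1 with hn₀
  set I : Ideal (𝓞 K) := Ideal.span {ζ - 1} with hI
  -- q^f ≥ 2
  have hqf1 : 0 < q ^ f := pow_pos hq.pos f
  have hqf2 : 2 ≤ q ^ f := by
    rcases Nat.lt_or_ge (q ^ f) 2 with h | h
    · exfalso
      apply hexact.2
      have h0 : q ^ f - 1 = 0 := by omega
      rw [h0]
      exact dvd_zero _
    · exact h
  -- norm of A
  set N := Algebra.norm ℤ A with hN
  -- N.natAbs = (q^f)^p
  have habs : N.natAbs = (q ^ f) ^ p := by
    have h1 : Ideal.absNorm (Ideal.span {A}) = N.natAbs := Ideal.absNorm_span_singleton A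
    rw [hAspan, map_pow] at h1
    have h2 : Ideal.absNorm 𝔮 = q ^ f := by
      rw [Ideal.absNorm_apply, Submodule.cardQuot_apply, hf]
    rw [h2] at h1
    exact h1.symm
  have hN1 : N ≠ 1 := by
    intro h
    rw [h] at habs
    have : 1 < (q ^ f) ^ p := Nat.one_lt_pow hp.ne_zero (by omega)
    omega
  -- key : every conjugate of A is ≡ 1 mod I ^ n₀
  obtain ⟨c, hc⟩ : ∃ c, A - 1 = (ζ - 1) ^ n₀ * c := by
    rw [hI, Ideal.span_singleton_pow, Ideal.mem_span_singleton] at hmem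
    obtain ⟨c, hc⟩ := hmem
    exact ⟨c, hc⟩
  have key : ∀ σ : K ≃ₐ[ℚ] K, galRestrict ℤ ℚ K (𝓞 K) σ A - 1 ∈ I ^ n₀ := by
    intro σ
    set τ := galRestrict ℤ ℚ K (𝓞 K) σ with hτ
    have hτζ : τ ζ - 1 ∈ I := by
      have hpow : (τ ζ) ^ p = 1 := by
        rw [← map_pow, hζ.pow_eq_one, map_one]
      obtain ⟨i, -, hi⟩ := hζ.eq_pow_of_pow_eq_one hpow
      rw [← hi, hI, Ideal.mem_span_singleton]
      simpa using sub_dvd_pow_sub_pow ζ 1 i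
    have h1 : τ A - 1 = (τ ζ - 1) ^ n₀ * τ c := by
      have h2 := congrArg τ hc
      simpa only [map_sub, map_mul, map_pow, map_one] using h2
    rw [h1]
    exact Ideal.mul_mem_right _ _ (Ideal.pow_mem_pow hτζ n₀)
  -- N as product of conjugates
  have hprod : ((N : ℤ) : 𝓞 K) = ∏ σ : K ≃ₐ[ℚ] K, galRestrict ℤ ℚ K (𝓞 K) σ A := by
    apply RingOfIntegers.coe_injective
    rw [map_prod]
    simp only [algebraMap_galRestrict_apply]
    rw [← Algebra.norm_eq_prod_automorphisms, ← Algebra.coe_norm_int]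
    simp only [map_intCast]
    rfl
  -- N ≡ 1 mod I ^ n₀
  have hmemN : ((N : ℤ) : 𝓞 K) - 1 ∈ I ^ n₀ := by
    have h1 : Ideal.Quotient.mk (I ^ n₀) ((N : ℤ) : 𝓞 K) = Ideal.Quotient.mk (I ^ n₀) 1 := by
      rw [hprod, map_prod, map_one]
      refine Finset.prod_eq_one fun σ _ => ?_
      rw [show (1 : (𝓞 K) ⧸ I ^ n₀) = Ideal.Quotient.mk (I ^ n₀) 1 from (map_one _).symm]
      exact (Ideal.Quotient.eq).2 (key σ)
    exact (Ideal.Quotient.eq).1 h1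
  -- absNorm of I is p
  have hζK : IsPrimitiveRoot (algebraMap (𝓞 K) K ζ) p :=
    hζ.map_of_injective RingOfIntegers.coe_injective
  have hirr := Polynomial.cyclotomic.irreducible_rat hp.pos
  have hNI : Ideal.absNorm I = p := by
    rw [hI, Ideal.absNorm_span_singleton]
    have hnormQ : Algebra.norm ℚ (algebraMap (𝓞 K) K (ζ - 1)) = p := by
      rw [map_sub, map_one]
      exact @stmt11_aux_norm (⟨p, hp.pos⟩ : ℕ+) hp hp2 K _ _ ‹IsCyclotomicExtension {p} ℚ K› _ hζK
    have hint : (Algebra.norm ℤ (ζ - 1) : ℚ) = (p : ℚ) := by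
      rw [Algebra.coe_norm_int, hnormQ]
    have : Algebra.norm ℤ (ζ - 1) = (p : ℤ) := by exact_mod_cast hint
    rw [this]
    simp
  -- finrank
  have hrank : Module.finrank ℤ (𝓞 K) = p - 1 := by
    rw [RingOfIntegers.rank, IsCyclotomicExtension.finrank K hirr]
    simp [Nat.totient_prime hp]
  -- p^3 ∣ N - 1
  have hdvd3 : (p : ℤ) ^ 3 ∣ N - 1 := by
    have hle : Ideal.span {((N : ℤ) : 𝓞 K) - 1} ≤ I ^ n₀ :=
      (Ideal.span_singleton_le_iff_mem _).2 hmemN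
    have hdvd := Ideal.absNorm_dvd_absNorm_of_le hle
    rw [Ideal.absNorm_span_singleton, map_pow, hNI] at hdvd
    have hcast : (((N : ℤ) : 𝓞 K) - 1) = algebraMap ℤ (𝓞 K) (N - 1) := by
      rw [map_sub, map_one, eq_intCast]
    have hnormZ : Algebra.norm ℤ ((algebraMap ℤ (𝓞 K)) (N - 1)) = (N - 1) ^ (p - 1) := by
      rw [Algebra.norm_algebraMap_of_basis (Module.Free.chooseBasis ℤ (𝓞 K)),
        ← Module.finrank_eq_card_chooseBasisIndex, hrank]
    rw [hcast, hnormZ, Int.natAbs_pow] at hdvd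
    have hm0 : (N - 1).natAbs ≠ 0 := by
      simp only [ne_eq, Int.natAbs_eq_zero, sub_eq_zero]
      exact hN1
    have h3 : p ^ 3 ∣ (N - 1).natAbs := by
      have hfac := (Nat.Prime.pow_dvd_iff_le_factorization hp (pow_ne_zero _ hm0)).1 hdvd
      rw [Nat.factorization_pow] at hfac
      simp only [Finsupp.smul_apply, smul_eq_mul] at hfac
      have h4 : 3 ≤ (N - 1).natAbs.factorization p := by
        by_contra h
        push_neg at h
        have h5 : (N - 1).natAbs.factorization p ≤ 2 := by omega
        have h6 : (p - 1) * (N - 1).natAbs.factorization p ≤ (p - 1) * 2 :=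
          Nat.mul_le_mul_left _ h5
        omega
      exact (Nat.Prime.pow_dvd_iff_le_factorization hp hm0).2 h4
    have h3' : ((p : ℤ) ^ 3).natAbs ∣ (N - 1).natAbs := by
      rw [Int.natAbs_pow, Int.natAbs_natCast]
      exact h3
    exact Int.natAbs_dvd_natAbs.1 h3'
  -- final contradiction
  set x : ℤ := (q : ℤ) ^ f with hx
  have hxcast : (((q ^ f) ^ p : ℕ) : ℤ) = x ^ p := by push_cast; ring
  have hpx : ¬ (p : ℤ) ∣ x := by
    intro h
    rw [hx] at h
    have h1 : p ∣ q ^ f := by exact_mod_cast h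
    have h2 : p ∣ q := hp.dvd_of_dvd_pow h1
    exact hqp ((Nat.prime_dvd_prime_iff_eq hp hq).1 h2).symm
  have hdZ : (p : ℤ) ∣ x - 1 := by
    have := hexact.1
    have hcast : ((q ^ f - 1 : ℕ) : ℤ) = x - 1 := by
      rw [Nat.cast_sub (by omega)]; push_cast; ring
    rw [← hcast]
    exact_mod_cast this
  have hndZ : ¬ (p : ℤ) ^ 2 ∣ x - 1 := by
    intro h
    apply hexact.2
    have hcast : ((q ^ f - 1 : ℕ) : ℤ) = x - 1 := by
      rw [Nat.cast_sub (by omega)]; push_cast; ring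
    rw [← hcast] at h
    exact_mod_cast h
  rcases Int.natAbs_eq N with hNe | hNe
  · -- N = (q^f)^p
    rw [habs] at hNe
    rw [hNe, hxcast] at hdvd3
    -- LTE
    have hlte := Int.emultiplicity_pow_sub_pow hp hoddp hdZ hpx p
    have he1 : emultiplicity ((p : ℕ) : ℤ) (x - 1) = (1 : ℕ) := by
      rw [emultiplicity_eq_coe]
      constructor
      · simpa using hdZ
      · simpa using hndZ
    have he2 : emultiplicity p p = (1 : ℕ) := by
      rw [emultiplicity_eq_coe]
      refine ⟨by simpa using dvd_refl p, ?_⟩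
      intro h
      have h5 : p ^ 2 ≤ p ^ 1 := by simpa using Nat.le_of_dvd hp.pos h
      have h6 : p ^ 1 < p ^ 2 := Nat.pow_lt_pow_right hp.one_lt (by norm_num)
      omega
    rw [one_pow] at hlte
    have hge : (3 : ℕ) ≤ emultiplicity ((p : ℕ) : ℤ) (x ^ p - 1) := by
      apply le_emultiplicity_of_pow_dvd
      exact_mod_cast hdvd3
    rw [hlte, he1, he2] at hge
    have : (3 : ℕ) ≤ ((2 : ℕ) : ℕ∞) := by exact_mod_cast hge
    exact absurd (by exact_mod_cast this : (3 : ℕ) ≤ 2) (by omega)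
  · -- N = -(q^f)^p
    rw [habs] at hNe
    have hp1 : (p : ℤ) ∣ N - 1 := dvd_trans (dvd_pow_self _ (by norm_num)) hdvd3
    rw [hNe, hxcast] at hp1
    -- p ∣ -x^p - 1, so p ∣ x^p + 1
    have h1 : (p : ℤ) ∣ x ^ p + 1 := by
      have h1' := dvd_neg.2 hp1
      have h1'' : -(-x ^ p - 1) = x ^ p + 1 := by ring
      rwa [h1''] at h1'
    have h2 : (p : ℤ) ∣ x ^ p - 1 :=
      hdZ.trans (by simpa using sub_dvd_pow_sub_pow x 1 p)
    have h3 : (p : ℤ) ∣ 2 := by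
      have := dvd_sub h1 h2
      simpa using this
    have h4 : p ∣ 2 := by exact_mod_cast h3
    have := Nat.le_of_dvd (by norm_num) h4
    omega
end
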